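/- Characterization of value sufficiency (finite case): let V = v(S,G) and Z = φ(S,G). The representation Z is value-sufficient, i.e. I(V;G|S,Z) = 0, if and only if there exists a function ṽ : 𝒮 × 𝒵 → 𝒱 such that v(s,g) = ṽ(s, φ(s,g)) for every (s,g) with p(s,g) > 0. -/

import Mathlib

open scoped Classical
open Finset

/-- Joint probability `P(f = x)` of a discrete random variable `f` on the sample space
`𝒮 × 𝒢 × 𝒜` equipped with the pmf `p`. -/
noncomputable def Pr {𝒮 𝒢 𝒜 : Type*} [Fintype 𝒮] [Fintype 𝒢] [Fintype 𝒜] {X : Type*}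
    (p : 𝒮 × 𝒢 × 𝒜 → ℝ) (f : 𝒮 × 𝒢 × 𝒜 → X) (x : X) : ℝ :=
  ∑ ω : 𝒮 × 𝒢 × 𝒜, if f ω = x then p ω else 0

/-- Conditional mutual information `I(X;Y|W)` of discrete random variables that are
deterministic functions of a sample drawn from the pmf `p` on `𝒮 × 𝒢 × 𝒜`. -/
noncomputable def CMI {𝒮 𝒢 𝒜 : Type*} [Fintype 𝒮] [Fintype 𝒢] [Fintype 𝒜]
    {X Y W : Type*} [Fintype X] [Fintype Y] [Fintype W]
    (p : 𝒮 × 𝒢 × 𝒜 → ℝ) (fX : 𝒮 × 𝒢 × 𝒜 → X) (fY : 𝒮 × 𝒢 × 𝒜 → Y)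
    (fW : 𝒮 × 𝒢 × 𝒜 → W) : ℝ :=
  ∑ x : X, ∑ y : Y, ∑ w : W,
    if 0 < Pr p (fun ω => (fX ω, fY ω, fW ω)) (x, y, w) then
      Pr p (fun ω => (fX ω, fY ω, fW ω)) (x, y, w) *
        Real.log ((Pr p (fun ω => (fX ω, fY ω, fW ω)) (x, y, w) * Pr p fW w) /
          (Pr p (fun ω => (fX ω, fW ω)) (x, w) * Pr p (fun ω => (fY ω, fW ω)) (y, w)))
    else 0

/-- Marginal `p(s,g) := ∑ₐ p(s,g,a)`. -/
noncomputable def pSG {𝒮 𝒢 𝒜 : Type*} [Fintype 𝒜] (p : 𝒮 × 𝒢 × 𝒜 → ℝ) (s : 𝒮) (g : 𝒢) : ℝ :=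
  ∑ a : 𝒜, p (s, g, a)

/-- Conditional `p(a|s,g) := p(s,g,a) / p(s,g)`. -/
noncomputable def pA {𝒮 𝒢 𝒜 : Type*} [Fintype 𝒜] (p : 𝒮 × 𝒢 × 𝒜 → ℝ) (s : 𝒮) (g : 𝒢)
    (a : 𝒜) : ℝ :=
  p (s, g, a) / pSG p s g

section Aux
variable {𝒮 𝒢 𝒜 : Type*} [Fintype 𝒮] [Fintype 𝒢] [Fintype 𝒜] {p : 𝒮 × 𝒢 × 𝒜 → ℝ}

lemma Pr_nonneg (hp0 : ∀ ω, 0 ≤ p ω) {X : Type*} (f : 𝒮 × 𝒢 × 𝒜 → X) (x : X) :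
    0 ≤ Pr p f x :=
  Finset.sum_nonneg fun ω _ => by split_ifs; exacts [hp0 ω, le_refl 0]

lemma Pr_exists (hp0 : ∀ ω, 0 ≤ p ω) {X : Type*} {f : 𝒮 × 𝒢 × 𝒜 → X} {x : X}
    (h : 0 < Pr p f x) : ∃ ω, f ω = x ∧ 0 < p ω := by
  by_contra hc
  push_neg at hc
  have : Pr p f x = 0 := Finset.sum_eq_zero fun ω _ => by
    split_ifs with hf
    · exact le_antisymm (hc ω hf) (hp0 ω)
    · rfl
  simp [this] at h

lemma Pr_congr (hp0 : ∀ ω, 0 ≤ p ω) {X Y : Type*} {f : 𝒮 × 𝒢 × 𝒜 → X} {g : 𝒮 × 𝒢 × 𝒜 → Y}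
    {x : X} {y : Y} (h : ∀ ω, 0 < p ω → (f ω = x ↔ g ω = y)) : Pr p f x = Pr p g y :=
  Finset.sum_congr rfl fun ω _ => by
    rcases eq_or_lt_of_le (hp0 ω) with h0 | h0
    · simp [← h0]
    · exact if_congr (h ω h0) rfl rfl

lemma Pr_le (hp0 : ∀ ω, 0 ≤ p ω) {X Y : Type*} {f : 𝒮 × 𝒢 × 𝒜 → X} {g : 𝒮 × 𝒢 × 𝒜 → Y}
    {x : X} {y : Y} (h : ∀ ω, f ω = x → g ω = y) : Pr p f x ≤ Pr p g y :=
  Finset.sum_le_sum fun ω _ => by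
    split_ifs with h1 h2
    · exact le_refl _
    · exact absurd (h ω h1) h2
    · exact hp0 ω
    · exact le_refl 0

lemma Pr_add_le (hp0 : ∀ ω, 0 ≤ p ω) {X Y W : Type*} {f : 𝒮 × 𝒢 × 𝒜 → X}
    {f' : 𝒮 × 𝒢 × 𝒜 → Y} {h : 𝒮 × 𝒢 × 𝒜 → W} {x : X} {x' : Y} {w : W}
    (hdisj : ∀ ω, f ω = x → f' ω ≠ x')
    (h1 : ∀ ω, f ω = x → h ω = w) (h2 : ∀ ω, f' ω = x' → h ω = w) :
    Pr p f x + Pr p f' x' ≤ Pr p h w := by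
  rw [Pr, Pr, Pr, ← Finset.sum_add_distrib]
  refine Finset.sum_le_sum fun ω _ => ?_
  by_cases hf : f ω = x <;> by_cases hf' : f' ω = x'
  · exact absurd hf' (hdisj ω hf)
  · simp [hf, hf', h1 ω hf]
  · simp [hf, hf', h2 ω hf']
  · simp only [if_neg hf, if_neg hf']
    split_ifs <;> simp [hp0 ω]

lemma sum_Pr {X : Type*} [Fintype X] (f : 𝒮 × 𝒢 × 𝒜 → X) :
    ∑ x : X, Pr p f x = ∑ ω : 𝒮 × 𝒢 × 𝒜, p ω := by
  simp only [Pr]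
  rw [Finset.sum_comm]
  exact Finset.sum_congr rfl fun ω _ => by simp

lemma Pr_sum_fst {X Y : Type*} [Fintype X] (f : 𝒮 × 𝒢 × 𝒜 → X) (g : 𝒮 × 𝒢 × 𝒜 → Y) (y : Y) :
    ∑ x : X, Pr p (fun ω => (f ω, g ω)) (x, y) = Pr p g y := by
  simp only [Pr]
  rw [Finset.sum_comm]
  refine Finset.sum_congr rfl fun ω _ => ?_
  simp [Prod.ext_iff, ite_and]

lemma Pr_proj (p : 𝒮 × 𝒢 × 𝒜 → ℝ) (s : 𝒮) (g : 𝒢) :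
    Pr p (fun ω => (ω.1, ω.2.1)) (s, g) = pSG p s g := by
  rw [Pr, Fintype.sum_prod_type]
  simp only [Prod.ext_iff, ite_and, Fintype.sum_prod_type, Finset.sum_ite_irrel,
    Finset.sum_const_zero, Finset.sum_ite_eq', Finset.mem_univ, if_true, pSG]
  rw [Finset.sum_comm]
  simp [Finset.sum_ite_eq']

omit [Fintype 𝒮] [Fintype 𝒢] in
lemma pSG_pos_of (hp0 : ∀ ω, 0 ≤ p ω) {ω : 𝒮 × 𝒢 × 𝒜} (h : 0 < p ω) :
    0 < pSG p ω.1 ω.2.1 :=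
  lt_of_lt_of_le h (Finset.single_le_sum (fun a _ => hp0 (ω.1, ω.2.1, a)) (Finset.mem_univ ω.2.2))

lemma sum3 {A B C : Type*} [Fintype A] [Fintype B] [Fintype C] (f : A × B × C → ℝ) :
    ∑ t : A × B × C, f t = ∑ a : A, ∑ b : B, ∑ c : C, f (a, b, c) := by
  rw [Fintype.sum_prod_type]
  exact Finset.sum_congr rfl fun a _ => Fintype.sum_prod_type _

end Aux

lemma key_ineq {a b c d : ℝ} (ha : 0 < a) (hb : 0 < b) (hc : 0 < c) (hd : 0 < d) :
    a - c * d / b ≤ a * Real.log (a * b / (c * d)) := by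
  have hx : (0:ℝ) < c * d / b / a := by positivity
  have hlog : Real.log (a * b / (c * d)) = - Real.log (c * d / b / a) := by
    rw [← Real.log_inv]
    congr 1
    field_simp
  have h1 := Real.log_le_sub_one_of_pos hx
  have h2 : a * (c * d / b / a) = c * d / b := by field_simp
  nlinarith [h1, h2]

lemma key_ineq_strict {a b c d : ℝ} (ha : 0 < a) (hb : 0 < b) (hc : 0 < c) (hd : 0 < d)
    (hne : c * d / b ≠ a) :
    a - c * d / b < a * Real.log (a * b / (c * d)) := by
  have hx : (0:ℝ) < c * d / b / a := by positivity
  have hlog : Real.log (a * b / (c * d)) = - Real.log (c * d / b / a) := by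
    rw [← Real.log_inv]
    congr 1
    field_simp
  have hx1 : c * d / b / a ≠ 1 := fun h => hne ((div_eq_one_iff_eq ha.ne').mp h)
  have h1 := Real.log_lt_sub_one_of_pos hx hx1
  have h2 : a * (c * d / b / a) = c * d / b := by field_simp
  nlinarith [h1, h2]

/-- Core information inequality: `CMI ≥ 0`, with strictness when the joint law differs from
the conditional-product law at some point of the support. -/
lemma CMI_core {𝒮 𝒢 𝒜 X Y W : Type*} [Fintype 𝒮] [Fintype 𝒢] [Fintype 𝒜]
    [Fintype X] [Fintype Y] [Fintype W]
    (p : 𝒮 × 𝒢 × 𝒜 → ℝ) (hp0 : ∀ ω, 0 ≤ p ω) (hp1 : ∑ ω : 𝒮 × 𝒢 × 𝒜, p ω = 1)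
    (fX : 𝒮 × 𝒢 × 𝒜 → X) (fY : 𝒮 × 𝒢 × 𝒜 → Y) (fW : 𝒮 × 𝒢 × 𝒜 → W) :
    0 ≤ CMI p fX fY fW ∧
      ∀ x0 y0 w0, 0 < Pr p (fun ω => (fX ω, fY ω, fW ω)) (x0, y0, w0) →
        Pr p (fun ω => (fX ω, fW ω)) (x0, w0) * Pr p (fun ω => (fY ω, fW ω)) (y0, w0) /
            Pr p fW w0 ≠ Pr p (fun ω => (fX ω, fY ω, fW ω)) (x0, y0, w0) →
          0 < CMI p fX fY fW := by
  set P : X × Y × W → ℝ := fun t => Pr p (fun ω => (fX ω, fY ω, fW ω)) t with hP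
  set T : X × Y × W → ℝ := fun t =>
    if 0 < P t then
      P t * Real.log (P t * Pr p fW t.2.2 /
        (Pr p (fun ω => (fX ω, fW ω)) (t.1, t.2.2) *
          Pr p (fun ω => (fY ω, fW ω)) (t.2.1, t.2.2)))
    else 0 with hT
  set L : X × Y × W → ℝ := fun t =>
    (if 0 < P t then P t else 0) -
      (if 0 < P t then
        Pr p (fun ω => (fX ω, fW ω)) (t.1, t.2.2) *
          Pr p (fun ω => (fY ω, fW ω)) (t.2.1, t.2.2) / Pr p fW t.2.2
      else 0) with hL
  have hCMI : CMI p fX fY fW = ∑ t : X × Y × W, T t := by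
    rw [CMI, sum3 T]
  -- pointwise bounds on Pr
  have hle_xw : ∀ x y w, P (x, y, w) ≤ Pr p (fun ω => (fX ω, fW ω)) (x, w) := fun x y w =>
    Pr_le hp0 fun ω h => by
      simp only [Prod.mk.injEq] at h ⊢; exact ⟨h.1, h.2.2⟩
  have hle_yw : ∀ x y w, P (x, y, w) ≤ Pr p (fun ω => (fY ω, fW ω)) (y, w) := fun x y w =>
    Pr_le hp0 fun ω h => by
      simp only [Prod.mk.injEq] at h ⊢; exact ⟨h.2.1, h.2.2⟩
  have hle_w : ∀ x y w, P (x, y, w) ≤ Pr p fW w := fun x y w =>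
    Pr_le hp0 fun ω h => congrArg (fun t : X × Y × W => t.2.2) h
  have hLle : ∀ t : X × Y × W, L t ≤ T t := by
    rintro ⟨x, y, w⟩
    by_cases hPt : 0 < P (x, y, w)
    · have hxw : 0 < Pr p (fun ω => (fX ω, fW ω)) (x, w) := lt_of_lt_of_le hPt (hle_xw x y w)
      have hyw : 0 < Pr p (fun ω => (fY ω, fW ω)) (y, w) := lt_of_lt_of_le hPt (hle_yw x y w)
      have hw : 0 < Pr p fW w := lt_of_lt_of_le hPt (hle_w x y w)
      simp only [hL, hT, if_pos hPt]
      have := key_ineq hPt hw hxw hyw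
      linarith
    · simp [hL, hT, hPt]
  -- the sum of the lower bounds is nonnegative
  have hsum1 : ∑ t : X × Y × W, (if 0 < P t then P t else 0) = 1 := by
    have : ∀ t : X × Y × W, (if 0 < P t then P t else 0) = P t := by
      intro t
      by_cases h : 0 < P t
      · simp [h]
      · simp [h, le_antisymm (not_lt.mp h) (Pr_nonneg hp0 _ _)]
    rw [Finset.sum_congr rfl fun t _ => this t]
    exact (sum_Pr _).trans hp1
  have hsum2 : ∑ t : X × Y × W,
      (if 0 < P t then
        Pr p (fun ω => (fX ω, fW ω)) (t.1, t.2.2) *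
          Pr p (fun ω => (fY ω, fW ω)) (t.2.1, t.2.2) / Pr p fW t.2.2
      else 0) ≤ 1 := by
    have hbound : ∀ t : X × Y × W,
        (if 0 < P t then
          Pr p (fun ω => (fX ω, fW ω)) (t.1, t.2.2) *
            Pr p (fun ω => (fY ω, fW ω)) (t.2.1, t.2.2) / Pr p fW t.2.2
        else 0) ≤
        (if 0 < Pr p fW t.2.2 then
          Pr p (fun ω => (fX ω, fW ω)) (t.1, t.2.2) *
            Pr p (fun ω => (fY ω, fW ω)) (t.2.1, t.2.2) / Pr p fW t.2.2
        else 0) := by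
      rintro ⟨x, y, w⟩
      by_cases hPt : 0 < P (x, y, w)
      · have hw : 0 < Pr p fW w := lt_of_lt_of_le hPt (hle_w x y w)
        simp [hPt, hw]
      · simp only [if_neg hPt]
        split_ifs with hw
        · exact div_nonneg (mul_nonneg (Pr_nonneg hp0 _ _) (Pr_nonneg hp0 _ _)) hw.le
        · exact le_refl 0
    refine le_trans (Finset.sum_le_sum fun t _ => hbound t) ?_
    have hcollapse : ∑ t : X × Y × W,
        (if 0 < Pr p fW t.2.2 then
          Pr p (fun ω => (fX ω, fW ω)) (t.1, t.2.2) *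
            Pr p (fun ω => (fY ω, fW ω)) (t.2.1, t.2.2) / Pr p fW t.2.2
        else 0) = ∑ w : W, (if 0 < Pr p fW w then Pr p fW w else 0) := by
      rw [sum3]
      rw [Finset.sum_congr rfl fun x (_ : x ∈ univ) => Finset.sum_comm, Finset.sum_comm]
      refine Finset.sum_congr rfl fun w _ => ?_
      by_cases hw : 0 < Pr p fW w
      · simp only [if_pos hw]
        have inner : ∀ x : X, ∑ y : Y,
            Pr p (fun ω => (fX ω, fW ω)) (x, w) *
              Pr p (fun ω => (fY ω, fW ω)) (y, w) / Pr p fW w =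
            Pr p (fun ω => (fX ω, fW ω)) (x, w) *
              (∑ y : Y, Pr p (fun ω => (fY ω, fW ω)) (y, w)) / Pr p fW w := by
          intro x
          rw [← Finset.sum_div, ← Finset.mul_sum]
        rw [Finset.sum_congr rfl fun x _ => inner x]
        rw [← Finset.sum_div, ← Finset.sum_mul, Pr_sum_fst fX fW w, Pr_sum_fst fY fW w,
          mul_div_assoc, div_self hw.ne', mul_one]
      · simp [hw]
    rw [hcollapse]
    refine le_trans (Finset.sum_le_sum fun w (_ : w ∈ univ) => ?_) (le_of_eq ((sum_Pr fW).trans hp1))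
    split_ifs
    · exact le_refl _
    · exact Pr_nonneg hp0 _ _
  have hsumL : 0 ≤ ∑ t : X × Y × W, L t := by
    simp only [hL]
    rw [Finset.sum_sub_distrib, hsum1]
    linarith
  constructor
  · rw [hCMI]
    exact le_trans hsumL (Finset.sum_le_sum fun t _ => hLle t)
  · intro x0 y0 w0 h0 hne
    have hxw : 0 < Pr p (fun ω => (fX ω, fW ω)) (x0, w0) := lt_of_lt_of_le h0 (hle_xw x0 y0 w0)
    have hyw : 0 < Pr p (fun ω => (fY ω, fW ω)) (y0, w0) := lt_of_lt_of_le h0 (hle_yw x0 y0 w0)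
    have hw : 0 < Pr p fW w0 := lt_of_lt_of_le h0 (hle_w x0 y0 w0)
    have hlt : L (x0, y0, w0) < T (x0, y0, w0) := by
      simp only [hL, hT, if_pos (show 0 < P (x0, y0, w0) from h0)]
      have := key_ineq_strict (show 0 < P (x0, y0, w0) from h0) hw hxw hyw hne
      linarith
    have : ∑ t : X × Y × W, L t < ∑ t : X × Y × W, T t :=
      Finset.sum_lt_sum (fun t _ => hLle t) ⟨(x0, y0, w0), Finset.mem_univ _, hlt⟩
    rw [hCMI]
    linarith

theorem value_sufficiency_iff_factorization {𝒮 𝒢 𝒜 𝒵 𝒱 : Type*}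
    [Fintype 𝒮] [Fintype 𝒢] [Fintype 𝒜] [Fintype 𝒵] [Fintype 𝒱]
    [Nonempty 𝒮] [Nonempty 𝒢] [Nonempty 𝒜] [Nonempty 𝒵] [Nonempty 𝒱]
    (p : 𝒮 × 𝒢 × 𝒜 → ℝ) (hp0 : ∀ ω, 0 ≤ p ω) (hp1 : ∑ ω : 𝒮 × 𝒢 × 𝒜, p ω = 1)
    (φ : 𝒮 × 𝒢 → 𝒵) (v : 𝒮 × 𝒢 → 𝒱) :
    CMI p (fun ω => v (ω.1, ω.2.1)) (fun ω => ω.2.1)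
        (fun ω => (ω.1, φ (ω.1, ω.2.1))) = 0 ↔
      ∃ vTilde : 𝒮 × 𝒵 → 𝒱, ∀ s g, 0 < pSG p s g → v (s, g) = vTilde (s, φ (s, g)) := by
  constructor
  · intro hCMI0
    refine ⟨fun sz =>
      if h : ∃ g, 0 < pSG p sz.1 g ∧ φ (sz.1, g) = sz.2 then v (sz.1, h.choose)
      else Classical.arbitrary 𝒱, ?_⟩
    intro s g hg
    have hex : ∃ g', 0 < pSG p s g' ∧ φ (s, g') = φ (s, g) := ⟨g, hg, rfl⟩
    simp only [dif_pos hex]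
    obtain ⟨hg'pos, hφg'⟩ := hex.choose_spec
    by_contra hne
    apply absurd hCMI0
    apply ne_of_gt
    have hPeq : Pr p (fun ω : 𝒮 × 𝒢 × 𝒜 =>
        (v (ω.1, ω.2.1), ω.2.1, (ω.1, φ (ω.1, ω.2.1)))) (v (s, g), g, (s, φ (s, g))) =
        pSG p s g := by
      rw [← Pr_proj p s g]
      refine Pr_congr hp0 fun ω _ => ⟨fun h => ?_, fun h => ?_⟩
      · simp only [Prod.mk.injEq] at h ⊢
        exact ⟨h.2.2.1, h.2.1⟩
      · simp only [Prod.mk.injEq] at h ⊢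
        refine ⟨by rw [h.1, h.2], h.2, h.1, by rw [h.1, h.2]⟩
    have h0 : 0 < Pr p (fun ω : 𝒮 × 𝒢 × 𝒜 =>
        (v (ω.1, ω.2.1), ω.2.1, (ω.1, φ (ω.1, ω.2.1)))) (v (s, g), g, (s, φ (s, g))) := by
      rw [hPeq]; exact hg
    refine (CMI_core p hp0 hp1 _ _ _).2 (v (s, g)) g (s, φ (s, g)) h0 ?_
    -- Show strict discrepancy at the bad point
    have hPyw : Pr p (fun ω : 𝒮 × 𝒢 × 𝒜 => (ω.2.1, (ω.1, φ (ω.1, ω.2.1)))) (g, (s, φ (s, g))) =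
        Pr p (fun ω : 𝒮 × 𝒢 × 𝒜 =>
          (v (ω.1, ω.2.1), ω.2.1, (ω.1, φ (ω.1, ω.2.1)))) (v (s, g), g, (s, φ (s, g))) := by
      refine Pr_congr hp0 fun ω _ => ⟨fun h => ?_, fun h => ?_⟩
      · simp only [Prod.mk.injEq] at h ⊢
        exact ⟨by rw [h.2.1, h.1], h.1, h.2.1, h.2.2⟩
      · simp only [Prod.mk.injEq] at h ⊢
        exact ⟨h.2.1, h.2.2.1, h.2.2.2⟩
    have hxw_lt : Pr p (fun ω : 𝒮 × 𝒢 × 𝒜 =>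
        (v (ω.1, ω.2.1), (ω.1, φ (ω.1, ω.2.1)))) (v (s, g), (s, φ (s, g))) <
        Pr p (fun ω : 𝒮 × 𝒢 × 𝒜 => (ω.1, φ (ω.1, ω.2.1))) (s, φ (s, g)) := by
      have hadd := Pr_add_le (p := p) hp0
        (f := fun ω : 𝒮 × 𝒢 × 𝒜 => (v (ω.1, ω.2.1), (ω.1, φ (ω.1, ω.2.1))))
        (f' := fun ω : 𝒮 × 𝒢 × 𝒜 => (ω.1, ω.2.1))
        (h := fun ω : 𝒮 × 𝒢 × 𝒜 => (ω.1, φ (ω.1, ω.2.1)))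
        (x := (v (s, g), (s, φ (s, g)))) (x' := (s, hex.choose)) (w := (s, φ (s, g)))
        (fun ω hf hc => by
          simp only [Prod.mk.injEq] at hf hc
          exact hne (by rw [← hf.1, hc.1, hc.2]))
        (fun ω hf => by
          simp only [Prod.mk.injEq] at hf ⊢
          exact hf.2)
        (fun ω hf => by
          simp only [Prod.mk.injEq] at hf ⊢
          exact ⟨hf.1, by rw [hf.1, hf.2, hφg']⟩)
      rw [Pr_proj p s hex.choose] at hadd
      linarith
    have hxw_pos : 0 < Pr p (fun ω : 𝒮 × 𝒢 × 𝒜 =>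
        (v (ω.1, ω.2.1), (ω.1, φ (ω.1, ω.2.1)))) (v (s, g), (s, φ (s, g))) :=
      lt_of_lt_of_le h0 (Pr_le hp0 fun ω h => by
        simp only [Prod.mk.injEq] at h ⊢
        exact ⟨h.1, h.2.2⟩)
    have hw_pos : 0 < Pr p (fun ω : 𝒮 × 𝒢 × 𝒜 => (ω.1, φ (ω.1, ω.2.1))) (s, φ (s, g)) :=
      lt_of_lt_of_le h0 (Pr_le hp0 fun ω h => by
        simp only [Prod.mk.injEq] at h ⊢
        exact h.2.2)
    rw [← hPyw]
    apply ne_of_lt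
    rw [div_lt_iff₀ hw_pos]
    have hyw_pos : 0 < Pr p (fun ω : 𝒮 × 𝒢 × 𝒜 =>
        (ω.2.1, (ω.1, φ (ω.1, ω.2.1)))) (g, (s, φ (s, g))) := by
      rw [hPyw]; exact h0
    nlinarith
  · rintro ⟨vT, hvT⟩
    rw [CMI]
    refine Finset.sum_eq_zero fun x _ => Finset.sum_eq_zero fun y _ =>
      Finset.sum_eq_zero fun w _ => ?_
    by_cases hP : 0 < Pr p (fun ω : 𝒮 × 𝒢 × 𝒜 =>
        (v (ω.1, ω.2.1), ω.2.1, (ω.1, φ (ω.1, ω.2.1)))) (x, y, w)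
    · obtain ⟨ω0, hω0, hpω0⟩ := Pr_exists hp0 hP
      simp only [Prod.mk.injEq] at hω0
      obtain ⟨hx, hy, hw1⟩ := hω0
      have hsg0 : 0 < pSG p ω0.1 ω0.2.1 := pSG_pos_of hp0 hpω0
      -- every support point with fW = w has fX = x
      have hkey : ∀ ω : 𝒮 × 𝒢 × 𝒜, 0 < p ω → (ω.1, φ (ω.1, ω.2.1)) = w →
          v (ω.1, ω.2.1) = x := by
        intro ω hpω hfw
        rw [← hw1] at hfw
        simp only [Prod.mk.injEq] at hfw
        rw [hvT ω.1 ω.2.1 (pSG_pos_of hp0 hpω), hfw.2, hfw.1, ← hvT ω0.1 ω0.2.1 hsg0, hx]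
      have e1 : Pr p (fun ω : 𝒮 × 𝒢 × 𝒜 => (v (ω.1, ω.2.1), (ω.1, φ (ω.1, ω.2.1)))) (x, w) =
          Pr p (fun ω : 𝒮 × 𝒢 × 𝒜 => (ω.1, φ (ω.1, ω.2.1))) w := by
        refine Pr_congr hp0 fun ω hpω => ⟨fun h => ?_, fun h => ?_⟩
        · simp only [Prod.mk.injEq] at h
          exact h.2
        · simp only [Prod.mk.injEq]
          exact ⟨hkey ω hpω h, h⟩
      have e2 : Pr p (fun ω : 𝒮 × 𝒢 × 𝒜 =>
          (v (ω.1, ω.2.1), ω.2.1, (ω.1, φ (ω.1, ω.2.1)))) (x, y, w) =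
          Pr p (fun ω : 𝒮 × 𝒢 × 𝒜 => (ω.2.1, (ω.1, φ (ω.1, ω.2.1)))) (y, w) := by
        refine Pr_congr hp0 fun ω hpω => ⟨fun h => ?_, fun h => ?_⟩
        · simp only [Prod.mk.injEq] at h ⊢
          exact ⟨h.2.1, h.2.2⟩
        · simp only [Prod.mk.injEq] at h ⊢
          exact ⟨hkey ω hpω h.2, h.1, h.2⟩
      have hw_pos : 0 < Pr p (fun ω : 𝒮 × 𝒢 × 𝒜 => (ω.1, φ (ω.1, ω.2.1))) w :=
        lt_of_lt_of_le hP (Pr_le hp0 fun ω h => by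
          simp only [Prod.mk.injEq] at h
          exact h.2.2)
      rw [if_pos hP, e1, ← e2]
      rw [mul_comm (Pr p (fun ω : 𝒮 × 𝒢 × 𝒜 => (ω.1, φ (ω.1, ω.2.1))) w)]
      rw [div_self (by positivity), Real.log_one, mul_zero]
    · rw [if_neg hP]
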